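/- Let α ∈ (0,1], and assume either α < 1, or α = 1 and GᵀΣ_ν⁻¹G is positive definite (equivalently Range(Gᵀ) = ℝ^{N_θ}). Then the steady-state equation C_∞⁻¹ = GᵀΣ_ν⁻¹G + (α²C_∞ + Σ_ω)⁻¹ has a unique symmetric positive definite solution C_∞ ∈ ℝ^{N_θ×N_θ}. -/

import Mathlib

set_option linter.unusedSectionVars false
set_option maxHeartbeats 1000000
open Matrix
variable {n : Type*} [Fintype n] [DecidableEq n]
namespace SSC


/-- Loewner order. -/
def Lw (A B : Matrix n n ℝ) : Prop := (B - A).PosSemidef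

lemma real_conjTranspose (A : Matrix n n ℝ) : Aᴴ = Aᵀ := by
  ext i j; simp [conjTranspose_apply]

lemma Lw.refl (A : Matrix n n ℝ) : Lw A A := by simp [Lw, Matrix.PosSemidef.zero]

lemma Lw.trans {A B C : Matrix n n ℝ} (h1 : Lw A B) (h2 : Lw B C) : Lw A C := by
  have := h1.add h2
  simpa [Lw, add_sub, sub_add_eq_add_sub] using (by rwa [add_comm] at this : ((C - B) + (B - A)).PosSemidef)

lemma Lw.add_left {A B C : Matrix n n ℝ} (h : Lw A B) : Lw (C + A) (C + B) := by
  simpa [Lw, add_sub_add_left_eq_sub] using h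

lemma herm_smul {A : Matrix n n ℝ} (hA : A.IsHermitian) (c : ℝ) :
    (c • A).IsHermitian := by
  have : (c • A)ᴴ = c • Aᴴ := by ext i j; simp [conjTranspose_apply]
  unfold Matrix.IsHermitian
  rw [this, hA]

lemma psd_smul {A : Matrix n n ℝ} (hA : A.PosSemidef) {c : ℝ} (hc : 0 ≤ c) :
    (c • A).PosSemidef := by
  refine .of_dotProduct_mulVec_nonneg (herm_smul hA.1 c) fun x => ?_
  have := hA.dotProduct_mulVec_nonneg x
  simp only [smul_mulVec, dotProduct_smul, smul_eq_mul]
  positivity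

lemma pd_smul {A : Matrix n n ℝ} (hA : A.PosDef) {c : ℝ} (hc : 0 < c) :
    (c • A).PosDef := by
  refine .of_dotProduct_mulVec_pos (herm_smul hA.1 c) fun x hx => ?_
  have := hA.dotProduct_mulVec_pos hx
  simp only [smul_mulVec, dotProduct_smul, smul_eq_mul]
  positivity

lemma Lw.smul {A B : Matrix n n ℝ} (h : Lw A B) {c : ℝ} (hc : 0 ≤ c) :
    Lw (c • A) (c • B) := by
  have := psd_smul h hc
  simpa [Lw, smul_sub] using this

/-- conjugation preserves the Loewner order -/
lemma Lw.conj {A B : Matrix n n ℝ} (h : Lw A B) (T : Matrix n n ℝ) :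
    Lw (T * A * Tᵀ) (T * B * Tᵀ) := by
  have := h.mul_mul_conjTranspose_same T
  rw [real_conjTranspose] at this
  simpa [Lw, Matrix.mul_sub, Matrix.sub_mul] using this




lemma pd_isUnit_det {A : Matrix n n ℝ} (hA : A.PosDef) : IsUnit A.det :=
  isUnit_iff_ne_zero.mpr hA.det_pos.ne'

lemma pd_mul_inv {A : Matrix n n ℝ} (hA : A.PosDef) : A * A⁻¹ = 1 :=
  Matrix.mul_nonsing_inv _ (pd_isUnit_det hA)

lemma pd_inv_mul {A : Matrix n n ℝ} (hA : A.PosDef) : A⁻¹ * A = 1 :=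
  Matrix.nonsing_inv_mul _ (pd_isUnit_det hA)

lemma psd_pd_of_unit {S : Matrix n n ℝ} (hS : S.PosSemidef) (h : IsUnit S.det) :
    S.PosDef := by
  refine .of_dotProduct_mulVec_pos hS.1 fun x hx => lt_of_le_of_ne (hS.dotProduct_mulVec_nonneg x) fun heq => hx ?_
  have h0 : S *ᵥ x = 0 := by
    have := (hS.dotProduct_mulVec_zero_iff x).mp ?_
    · exact this
    · simpa using heq.symm
  calc x = (S⁻¹ * S) *ᵥ x := by rw [Matrix.nonsing_inv_mul _ h, Matrix.one_mulVec]
    _ = S⁻¹ *ᵥ (S *ᵥ x) := by rw [← Matrix.mulVec_mulVec]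
    _ = 0 := by rw [h0, Matrix.mulVec_zero]

lemma psd_sqrt_aux {A : Matrix n n ℝ} (hA : A.PosSemidef) :
    ∃ S : Matrix n n ℝ, S.PosSemidef ∧ S * S = A := by
  open scoped MatrixOrder in
  exact ⟨CFC.sqrt A, (CFC.sqrt_nonneg A).posSemidef, CFC.sqrt_mul_sqrt_self A hA.nonneg⟩

lemma pd_sqrt {A : Matrix n n ℝ} (hA : A.PosDef) :
    ∃ S : Matrix n n ℝ, S.PosDef ∧ Sᵀ = S ∧ S * S = A := by
  obtain ⟨S0, hS0, hS0S0⟩ := psd_sqrt_aux hA.posSemidef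
  refine ⟨S0, ?_, ?_, hS0S0⟩
  · refine psd_pd_of_unit hS0 ?_
    have hdet : S0.det * S0.det = A.det := by
      rw [← Matrix.det_mul, hS0S0]
    refine isUnit_iff_ne_zero.mpr fun h0 => ?_
    rw [h0, mul_zero] at hdet
    exact hA.det_pos.ne' hdet.symm
  · have := hS0.1
    rwa [← Matrix.conjTranspose_eq_transpose_of_trivial]



/-- conjugation of a PD matrix by an invertible symmetric matrix -/
lemma pd_conj {A T : Matrix n n ℝ} (hA : A.PosDef) (hT : Tᵀ = T)
    (hTd : IsUnit T.det) : (T * A * T).PosDef := by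
  have h1 : (T * A * Tᴴ).IsHermitian := by
    have := (hA.posSemidef.mul_mul_conjTranspose_same T).1
    exact this
  have hTc : Tᴴ = T := by
    rw [Matrix.conjTranspose_eq_transpose_of_trivial, hT]
  refine .of_dotProduct_mulVec_pos (by rwa [hTc] at h1) fun x hx => ?_
  have hx' : T *ᵥ x ≠ 0 := by
    intro h0
    apply hx
    calc x = (T⁻¹ * T) *ᵥ x := by rw [Matrix.nonsing_inv_mul _ hTd, Matrix.one_mulVec]
      _ = T⁻¹ *ᵥ (T *ᵥ x) := by rw [← Matrix.mulVec_mulVec]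
      _ = 0 := by rw [h0, Matrix.mulVec_zero]
  have := hA.dotProduct_mulVec_pos hx'
  have hrw : x ⬝ᵥ (T * A * T) *ᵥ x = (T *ᵥ x) ⬝ᵥ A *ᵥ (T *ᵥ x) := by
    rw [← Matrix.mulVec_mulVec, ← Matrix.mulVec_mulVec, Matrix.dotProduct_mulVec x T,
      ← Matrix.mulVec_transpose, hT]
  simpa [hrw] using this

lemma idem_eq_one {E : Matrix n n ℝ} (hE : E * E = E) (h : IsUnit E.det) : E = 1 := by
  calc E = (E⁻¹ * E) * E := by rw [Matrix.nonsing_inv_mul _ h, Matrix.one_mul]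
    _ = E⁻¹ * (E * E) := by rw [Matrix.mul_assoc]
    _ = E⁻¹ * E := by rw [hE]
    _ = 1 := Matrix.nonsing_inv_mul _ h


/-- The inverse is antitone for the Loewner order on positive definite matrices. -/
lemma lw_inv {A B : Matrix n n ℝ} (hA : A.PosDef) (hB : B.PosDef) (h : Lw A B) :
    Lw B⁻¹ A⁻¹ := by
  obtain ⟨T, hTpd, hTt, hTT⟩ := pd_sqrt hB.inv
  have hTd := pd_isUnit_det hTpd
  have hX : (T * A * T).PosDef := pd_conj hA hTt hTd
  set X := T * A * T with hXdef
  have hBinv : B⁻¹⁻¹ = B := Matrix.nonsing_inv_nonsing_inv _ (pd_isUnit_det hB)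
  have hTBT : T * B * T = 1 := by
    have hB1 : B = T⁻¹ * T⁻¹ := by
      rw [← hBinv, ← hTT, Matrix.mul_inv_rev]
    rw [hB1, ← Matrix.mul_assoc, Matrix.mul_assoc (T * T⁻¹), pd_mul_inv hTpd,
      pd_inv_mul hTpd, Matrix.one_mul]
  have h1 : Lw X 1 := by
    have := h.conj T
    rwa [hTt, hTBT] at this
  obtain ⟨Y, hYpd, hYt, hYY⟩ := pd_sqrt hX.inv
  have hYXY : Y * X * Y = 1 := by
    apply idem_eq_one
    · calc Y * X * Y * (Y * X * Y) = Y * X * (Y * Y) * X * Y := by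
            simp only [Matrix.mul_assoc]
        _ = Y * (X * X⁻¹) * X * Y := by rw [hYY]; simp only [Matrix.mul_assoc]
        _ = Y * X * Y := by rw [pd_mul_inv hX]; simp only [Matrix.mul_assoc, Matrix.one_mul]
    · simp only [Matrix.det_mul]
      exact ((pd_isUnit_det hYpd).mul (pd_isUnit_det hX)).mul (pd_isUnit_det hYpd)
  have h2 : Lw 1 X⁻¹ := by
    have hc := h1.conj Y
    rw [hYt, hYXY, Matrix.mul_one, hYY] at hc
    exact hc
  have h3 := h2.conj T
  rw [hTt, Matrix.mul_one, hTT] at h3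
  have hXinv : T * X⁻¹ * T = A⁻¹ := by
    rw [hXdef, Matrix.mul_inv_rev, Matrix.mul_inv_rev]
    calc T * (T⁻¹ * (A⁻¹ * T⁻¹)) * T = (T * T⁻¹) * (A⁻¹ * T⁻¹ * T) := by
          simp only [Matrix.mul_assoc]
      _ = A⁻¹ := by rw [pd_mul_inv hTpd, Matrix.mul_assoc A⁻¹, pd_inv_mul hTpd,
          Matrix.mul_one, Matrix.one_mul]
  rwa [hXinv] at h3

lemma psd_sqrt' {A : Matrix n n ℝ} (hA : A.PosSemidef) :
    ∃ S : Matrix n n ℝ, S.PosSemidef ∧ Sᵀ = S ∧ S * S = A := by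
  obtain ⟨S0, hS0, hS0S0⟩ := psd_sqrt_aux hA
  refine ⟨S0, hS0, ?_, hS0S0⟩
  rw [← Matrix.conjTranspose_eq_transpose_of_trivial]
  exact hS0.1

lemma sym_apply {S : Matrix n n ℝ} (hS : Sᵀ = S) (i j : n) : S j i = S i j :=
  congrFun (congrFun hS i) j

lemma dot_sq {S : Matrix n n ℝ} (hS : Sᵀ = S) (x : n → ℝ) :
    x ⬝ᵥ (S * S) *ᵥ x = ∑ i, (S *ᵥ x) i ^ 2 := by
  rw [← Matrix.mulVec_mulVec, Matrix.dotProduct_mulVec, ← Matrix.mulVec_transpose, hS]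
  simp [dotProduct, pow_two]

lemma trace_sym_sq {S : Matrix n n ℝ} (hS : Sᵀ = S) :
    (S * S).trace = ∑ i, ∑ j, S i j ^ 2 := by
  simp only [Matrix.trace, Matrix.diag_apply, Matrix.mul_apply, pow_two]
  congr 1; ext i; congr 1; ext j; rw [sym_apply hS]

/-- `P ⪯ (tr P) • 1` for `P` PSD. -/
lemma psd_lw_trace {P : Matrix n n ℝ} (hP : P.PosSemidef) : Lw P (P.trace • 1) := by
  obtain ⟨S, hSpsd, hSt, hSS⟩ := psd_sqrt' hP
  have herm : (P.trace • (1 : Matrix n n ℝ) - P).IsHermitian :=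
    (herm_smul Matrix.isHermitian_one P.trace).sub hP.1
  refine .of_dotProduct_mulVec_nonneg herm fun x => ?_
  rw [star_trivial]
  have key : x ⬝ᵥ P *ᵥ x ≤ P.trace * ∑ j, x j ^ 2 := by
    rw [← hSS, dot_sq hSt, trace_sym_sq hSt, Finset.sum_mul]
    refine Finset.sum_le_sum fun i _ => ?_
    have h1 : (S *ᵥ x) i = ∑ j, S i j * x j := rfl
    rw [h1]
    exact Finset.sum_mul_sq_le_sq_mul_sq Finset.univ (fun j => S i j) x
  have hx2 : x ⬝ᵥ (P.trace • (1 : Matrix n n ℝ)) *ᵥ x = P.trace * ∑ j, x j ^ 2 := by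
    simp only [Matrix.smul_mulVec, Matrix.one_mulVec, dotProduct, Pi.smul_apply,
      smul_eq_mul, Finset.mul_sum, pow_two]
    congr 1; ext j; ring
  rw [Matrix.sub_mulVec, dotProduct_sub, hx2]
  linarith [key]

lemma psd_trace_nonneg {P : Matrix n n ℝ} (hP : P.PosSemidef) : 0 ≤ P.trace := by
  refine Finset.sum_nonneg fun i _ => ?_
  have := hP.dotProduct_mulVec_nonneg (Pi.single i 1)
  rw [star_trivial] at this
  simpa [dotProduct, Matrix.mulVec, Pi.single_apply] using this

lemma trace_mul_psd_nonneg {M N : Matrix n n ℝ} (hM : M.PosSemidef) (hN : N.PosSemidef) :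
    0 ≤ (M * N).trace := by
  obtain ⟨S, hSpsd, hSt, hSS⟩ := psd_sqrt' hN
  have h1 : (M * N).trace = (S * M * S).trace := by
    rw [← hSS, ← Matrix.mul_assoc, Matrix.trace_mul_cycle]
  rw [h1]
  refine psd_trace_nonneg ?_
  have := hM.mul_mul_conjTranspose_same S
  rwa [Matrix.conjTranspose_eq_transpose_of_trivial, hSt] at this

lemma trace_mul_le {M N : Matrix n n ℝ} (hM : M.PosSemidef) {c : ℝ}
    (hc : Lw N (c • 1)) : (M * N).trace ≤ c * M.trace := by
  have h0 : 0 ≤ (M * (c • 1 - N)).trace := trace_mul_psd_nonneg hM hc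
  rw [Matrix.mul_sub, Matrix.trace_sub, Matrix.mul_smul, Matrix.mul_one,
    Matrix.trace_smul, smul_eq_mul] at h0
  linarith

lemma smul_one_inv {c : ℝ} (hc : c ≠ 0) :
    ((c • 1 : Matrix n n ℝ))⁻¹ = c⁻¹ • 1 := by
  apply Matrix.inv_eq_right_inv
  rw [Matrix.smul_mul, Matrix.mul_smul, Matrix.one_mul, smul_smul, mul_inv_cancel₀ hc, one_smul]

/-- For `P, Q` positive definite there is `c > 0` with `c • P ⪯ Q`. -/
lemma pd_exists_smul_lw {P Q : Matrix n n ℝ} (hP : P.PosDef) (hQ : Q.PosDef) :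
    ∃ c : ℝ, 0 < c ∧ Lw (c • P) Q := by
  set t := P.trace + 1 with ht
  have htpos : 0 < t := by
    rw [ht]; have := psd_trace_nonneg hP.posSemidef; linarith
  have hPt : Lw P (t • 1) := by
    refine (psd_lw_trace hP.posSemidef).trans ?_
    show ((t • 1 : Matrix n n ℝ) - P.trace • 1).PosSemidef
    have : (t • 1 : Matrix n n ℝ) - P.trace • 1 = (1 : Matrix n n ℝ) := by
      rw [ht, add_smul, one_smul]; abel
    rw [this]; exact Matrix.PosSemidef.one
  set s := Q⁻¹.trace + 1 with hs
  have hspos : 0 < s := by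
    rw [hs]; have := psd_trace_nonneg hQ.inv.posSemidef; linarith
  have hQs : Lw Q⁻¹ (s • 1) := by
    refine (psd_lw_trace hQ.inv.posSemidef).trans ?_
    show ((s • 1 : Matrix n n ℝ) - Q⁻¹.trace • 1).PosSemidef
    have : (s • 1 : Matrix n n ℝ) - Q⁻¹.trace • 1 = (1 : Matrix n n ℝ) := by
      rw [hs, add_smul, one_smul]; abel
    rw [this]; exact Matrix.PosSemidef.one
  have hQinv : Lw (s⁻¹ • 1) Q := by
    have := lw_inv hQ.inv (pd_smul Matrix.PosDef.one hspos) hQs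
    rwa [smul_one_inv hspos.ne', Matrix.nonsing_inv_nonsing_inv _ (pd_isUnit_det hQ)] at this
  refine ⟨s⁻¹ * t⁻¹, by positivity, ?_⟩
  have h1 : Lw ((s⁻¹ * t⁻¹) • P) (s⁻¹ • 1) := by
    have h2 := hPt.smul (c := t⁻¹) (by positivity)
    rw [smul_smul, inv_mul_cancel₀ htpos.ne', one_smul] at h2
    have h3 := h2.smul (c := s⁻¹) (by positivity)
    rwa [smul_smul] at h3
  exact h1.trans hQinv

lemma pd_smul_inv {A : Matrix n n ℝ} (hA : A.PosDef) {c : ℝ} (hc : c ≠ 0) :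
    (c • A)⁻¹ = c⁻¹ • A⁻¹ := by
  apply Matrix.inv_eq_right_inv
  rw [Matrix.smul_mul, Matrix.mul_smul, pd_mul_inv hA, smul_smul, mul_inv_cancel₀ hc, one_smul]

lemma sub_eq_of_eq_add {X Y B M1 M2 : Matrix n n ℝ} (h1 : X = B + M1) (h2 : Y = B + M2) :
    X - Y = M1 - M2 := by rw [h1, h2]; abel

/-- Main uniqueness auxiliary lemma. -/
lemma uniq_aux {B Sω : Matrix n n ℝ} (hSω : Sω.PosDef) {α c : ℝ} (hα0 : 0 < α)
    (hc0 : 0 < c) (hc1 : c < 1)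
    {C₁ C₂ : Matrix n n ℝ} (h1 : C₁.PosDef) (h2 : C₂.PosDef)
    (e1 : C₁⁻¹ = B + (α ^ 2 • C₁ + Sω)⁻¹) (e2 : C₂⁻¹ = B + (α ^ 2 • C₂ + Sω)⁻¹)
    (hr1 : Lw ((α / c) • C₁) (α ^ 2 • C₁ + Sω))
    (hr2 : Lw ((α / c) • C₂) (α ^ 2 • C₂ + Sω)) : C₁ = C₂ := by
  set M₁ := α ^ 2 • C₁ + Sω with hM₁def
  set M₂ := α ^ 2 • C₂ + Sω with hM₂def
  have hM₁ : M₁.PosDef := Matrix.PosDef.posSemidef_add (psd_smul h1.posSemidef (by positivity)) hSω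
  have hM₂ : M₂.PosDef := Matrix.PosDef.posSemidef_add (psd_smul h2.posSemidef (by positivity)) hSω
  set D := C₂ - C₁ with hDdef
  have key : C₁⁻¹ * D * C₂⁻¹ = α ^ 2 • (M₁⁻¹ * D * M₂⁻¹) := by
    have lhs : C₁⁻¹ * D * C₂⁻¹ = C₁⁻¹ - C₂⁻¹ := by
      rw [hDdef, Matrix.mul_sub, Matrix.sub_mul, Matrix.mul_assoc, pd_mul_inv h2,
        Matrix.mul_one, pd_inv_mul h1, Matrix.one_mul]
    have hM21 : M₂ - M₁ = α ^ 2 • D := by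
      rw [hM₂def, hM₁def, hDdef, smul_sub]; abel
    have rhs : M₁⁻¹ * (α ^ 2 • D) * M₂⁻¹ = M₁⁻¹ - M₂⁻¹ := by
      rw [← hM21, Matrix.mul_sub, Matrix.sub_mul, Matrix.mul_assoc, pd_mul_inv hM₂,
        Matrix.mul_one, pd_inv_mul hM₁, Matrix.one_mul]
    have rhs' : M₁⁻¹ * (α ^ 2 • D) * M₂⁻¹ = α ^ 2 • (M₁⁻¹ * D * M₂⁻¹) := by
      rw [Matrix.mul_smul, Matrix.smul_mul]
    rw [lhs, ← rhs', rhs]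
    exact sub_eq_of_eq_add e1 e2
  obtain ⟨R₁, hR₁pd, hR₁t, hR₁R₁⟩ := pd_sqrt h1
  obtain ⟨R₂, hR₂pd, hR₂t, hR₂R₂⟩ := pd_sqrt h2
  have hR₁inv : C₁⁻¹ = R₁⁻¹ * R₁⁻¹ := by rw [← hR₁R₁, Matrix.mul_inv_rev]
  have hR₂inv : C₂⁻¹ = R₂⁻¹ * R₂⁻¹ := by rw [← hR₂R₂, Matrix.mul_inv_rev]
  have hR₁u : R₁ * R₁⁻¹ = 1 := pd_mul_inv hR₁pd
  have hR₁u' : R₁⁻¹ * R₁ = 1 := pd_inv_mul hR₁pd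
  have hR₂u : R₂ * R₂⁻¹ = 1 := pd_mul_inv hR₂pd
  have hR₂u' : R₂⁻¹ * R₂ = 1 := pd_inv_mul hR₂pd
  set D' := R₁⁻¹ * D * R₂⁻¹ with hD'def
  set S₁ := α • (R₁ * M₁⁻¹ * R₁) with hS₁def
  set S₂ := α • (R₂ * M₂⁻¹ * R₂) with hS₂def
  have hfix : D' = S₁ * D' * S₂ := by
    have expand : S₁ * D' * S₂ = α ^ 2 • (R₁ * (M₁⁻¹ * D * M₂⁻¹) * R₂) := by
      rw [hS₁def, hS₂def, hD'def]
      simp only [Matrix.smul_mul, Matrix.mul_smul, smul_smul, ← pow_two]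
      congr 1
      calc R₁ * M₁⁻¹ * R₁ * (R₁⁻¹ * D * R₂⁻¹) * (R₂ * M₂⁻¹ * R₂)
          = R₁ * (M₁⁻¹ * ((R₁ * R₁⁻¹) * (D * ((R₂⁻¹ * R₂) * (M₂⁻¹ * R₂))))) := by
            simp only [Matrix.mul_assoc]
        _ = R₁ * (M₁⁻¹ * D * M₂⁻¹) * R₂ := by
            rw [hR₁u, hR₂u']; simp only [Matrix.mul_one, Matrix.one_mul, Matrix.mul_assoc]
    have e3 : α ^ 2 • (R₁ * (M₁⁻¹ * D * M₂⁻¹) * R₂) = R₁ * (α ^ 2 • (M₁⁻¹ * D * M₂⁻¹)) * R₂ := by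
      rw [Matrix.mul_smul, Matrix.smul_mul]
    rw [expand, e3, ← key, hD'def, hR₁inv, hR₂inv]
    calc R₁⁻¹ * D * R₂⁻¹
        = (R₁ * R₁⁻¹) * (R₁⁻¹ * D * R₂⁻¹) * (R₂⁻¹ * R₂) := by
          rw [hR₁u, hR₂u', Matrix.one_mul, Matrix.mul_one]
      _ = R₁ * (R₁⁻¹ * R₁⁻¹ * D * (R₂⁻¹ * R₂⁻¹)) * R₂ := by
          simp only [Matrix.mul_assoc]
  have hcα : 0 < α / c := by positivity
  have hS₁psd : S₁.PosSemidef := by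
    have := hM₁.inv.posSemidef.mul_mul_conjTranspose_same R₁
    rw [Matrix.conjTranspose_eq_transpose_of_trivial, hR₁t] at this
    exact psd_smul this hα0.le
  have hS₂psd : S₂.PosSemidef := by
    have := hM₂.inv.posSemidef.mul_mul_conjTranspose_same R₂
    rw [Matrix.conjTranspose_eq_transpose_of_trivial, hR₂t] at this
    exact psd_smul this hα0.le
  have harith : α • ((α / c)⁻¹ • (1 : Matrix n n ℝ)) = c • 1 := by
    rw [smul_smul]; congr 1; field_simp
  have hS₁lw : Lw S₁ (c • 1) := by
    have hinv := lw_inv (pd_smul h1 hcα) hM₁ hr1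
    rw [pd_smul_inv h1 hcα.ne'] at hinv
    have hconj := hinv.conj R₁
    rw [hR₁t] at hconj
    have hone : R₁ * ((α / c)⁻¹ • C₁⁻¹) * R₁ = (α / c)⁻¹ • 1 := by
      rw [Matrix.mul_smul, Matrix.smul_mul]
      congr 1
      rw [hR₁inv]
      calc R₁ * (R₁⁻¹ * R₁⁻¹) * R₁ = (R₁ * R₁⁻¹) * (R₁⁻¹ * R₁) := by
            simp only [Matrix.mul_assoc]
        _ = 1 := by rw [hR₁u, hR₁u', Matrix.one_mul]
    rw [hone] at hconj
    have hsm := hconj.smul (c := α) hα0.le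
    rw [hS₁def]
    rwa [harith] at hsm
  have hS₂lw : Lw S₂ (c • 1) := by
    have hinv := lw_inv (pd_smul h2 hcα) hM₂ hr2
    rw [pd_smul_inv h2 hcα.ne'] at hinv
    have hconj := hinv.conj R₂
    rw [hR₂t] at hconj
    have hone : R₂ * ((α / c)⁻¹ • C₂⁻¹) * R₂ = (α / c)⁻¹ • 1 := by
      rw [Matrix.mul_smul, Matrix.smul_mul]
      congr 1
      rw [hR₂inv]
      calc R₂ * (R₂⁻¹ * R₂⁻¹) * R₂ = (R₂ * R₂⁻¹) * (R₂⁻¹ * R₂) := by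
            simp only [Matrix.mul_assoc]
        _ = 1 := by rw [hR₂u, hR₂u', Matrix.one_mul]
    rw [hone] at hconj
    have hsm := hconj.smul (c := α) hα0.le
    rw [hS₂def]
    rwa [harith] at hsm
  -- trace argument
  have hD'psd2 : (D' * D'ᵀ).PosSemidef := by
    have := Matrix.posSemidef_self_mul_conjTranspose D'
    rwa [Matrix.conjTranspose_eq_transpose_of_trivial] at this
  have hD'psd1 : (D'ᵀ * D').PosSemidef := by
    have := Matrix.posSemidef_conjTranspose_mul_self D'
    rwa [Matrix.conjTranspose_eq_transpose_of_trivial] at this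
  set t := (D'ᵀ * D').trace with htdef
  have htnn : 0 ≤ t := psd_trace_nonneg hD'psd1
  have hMpsd : (D'ᵀ * S₁ * D').PosSemidef := by
    have := hS₁psd.conjTranspose_mul_mul_same D'
    rwa [Matrix.conjTranspose_eq_transpose_of_trivial] at this
  have step1 : t ≤ c * (D'ᵀ * S₁ * D').trace := by
    have h := trace_mul_le hMpsd hS₂lw
    have heq : t = ((D'ᵀ * S₁ * D') * S₂).trace := by
      rw [htdef]
      nth_rewrite 2 [hfix]
      simp only [Matrix.mul_assoc]
    rw [heq]
    exact h
  have step2 : (D'ᵀ * S₁ * D').trace ≤ c * t := by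
    have heq2 : (D'ᵀ * S₁ * D').trace = ((D' * D'ᵀ) * S₁).trace := by
      rw [Matrix.trace_mul_cycle]
    have h := trace_mul_le hD'psd2 hS₁lw
    have hcomm : (D' * D'ᵀ).trace = t := by rw [htdef, Matrix.trace_mul_comm]
    rw [heq2]
    calc ((D' * D'ᵀ) * S₁).trace ≤ c * (D' * D'ᵀ).trace := h
      _ = c * t := by rw [hcomm]
  have hle : t ≤ c * (c * t) :=
    step1.trans (mul_le_mul_of_nonneg_left step2 hc0.le)
  have ht0 : t = 0 := by
    by_contra hne
    have htpos : 0 < t := lt_of_le_of_ne htnn (Ne.symm hne)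
    have hcc : c * c < 1 := by nlinarith
    nlinarith [mul_lt_mul_of_pos_right hcc htpos]
  have hD'0 : D' = 0 := by
    have hsum : t = ∑ i, ∑ j, (D' j i) ^ 2 := by
      rw [htdef]
      simp [Matrix.trace, Matrix.diag, Matrix.mul_apply, Matrix.transpose_apply, pow_two]
    have hs0 : ∑ i, ∑ j, (D' j i) ^ 2 = 0 := by rw [← hsum]; exact ht0
    have hz : ∀ i ∈ Finset.univ, ∑ j, (D' j i : ℝ) ^ 2 = 0 :=
      (Finset.sum_eq_zero_iff_of_nonneg fun i _ =>
        Finset.sum_nonneg fun j _ => sq_nonneg _).mp hs0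
    ext i j
    have h2 := (Finset.sum_eq_zero_iff_of_nonneg fun k _ => sq_nonneg _).mp
      (hz j (Finset.mem_univ j)) i (Finset.mem_univ i)
    simpa using sq_eq_zero_iff.mp h2
  have hD0 : D = 0 := by
    have hrd : R₁ * D' * R₂ = D := by
      rw [hD'def]
      calc R₁ * (R₁⁻¹ * D * R₂⁻¹) * R₂
          = (R₁ * R₁⁻¹) * (D * (R₂⁻¹ * R₂)) := by simp only [Matrix.mul_assoc]
        _ = D := by rw [hR₁u, hR₂u', Matrix.one_mul, Matrix.mul_one]
    rw [← hrd, hD'0, Matrix.mul_zero, Matrix.zero_mul]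
  have hCC : C₂ - C₁ = 0 := by rw [← hDdef]; exact hD0
  exact (sub_eq_zero.mp hCC).symm


/-- The fixed point map. -/
noncomputable def Phi (B Sω : Matrix n n ℝ) (α : ℝ) (X : Matrix n n ℝ) : Matrix n n ℝ :=
  (B + (α ^ 2 • X + Sω)⁻¹)⁻¹

section PhiLemmas
variable {B Sω : Matrix n n ℝ} {α : ℝ}

lemma lw_add_smul {X Y S : Matrix n n ℝ} (h : Lw X Y) {a : ℝ} (ha : 0 ≤ a) :
    Lw (a • X + S) (a • Y + S) := by
  show ((a • Y + S) - (a • X + S)).PosSemidef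
  have heq : (a • Y + S) - (a • X + S) = a • (Y - X) := by rw [smul_sub]; abel
  rw [heq]; exact psd_smul h ha

lemma lw_self_add_psd {P : Matrix n n ℝ} (hP : P.PosSemidef) (X : Matrix n n ℝ) :
    Lw X (P + X) := by
  show ((P + X) - X).PosSemidef
  simpa using hP

lemma pd_M (hSω : Sω.PosDef) {X : Matrix n n ℝ} (hX : X.PosDef) (hα0 : 0 < α) :
    (α ^ 2 • X + Sω).PosDef :=
  Matrix.PosDef.posSemidef_add (psd_smul hX.posSemidef (by positivity)) hSω

lemma pd_inner (hB : B.PosSemidef) (hSω : Sω.PosDef) {X : Matrix n n ℝ}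
    (hX : X.PosDef) (hα0 : 0 < α) : (B + (α ^ 2 • X + Sω)⁻¹).PosDef :=
  Matrix.PosDef.posSemidef_add hB (pd_M hSω hX hα0).inv

lemma phi_pd (hB : B.PosSemidef) (hSω : Sω.PosDef) {X : Matrix n n ℝ}
    (hX : X.PosDef) (hα0 : 0 < α) : (Phi B Sω α X).PosDef :=
  (pd_inner hB hSω hX hα0).inv

lemma phi_mono (hB : B.PosSemidef) (hSω : Sω.PosDef) {X Y : Matrix n n ℝ}
    (hX : X.PosDef) (hY : Y.PosDef) (hα0 : 0 < α) (h : Lw X Y) :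
    Lw (Phi B Sω α X) (Phi B Sω α Y) := by
  have h1 : Lw (α ^ 2 • X + Sω) (α ^ 2 • Y + Sω) := lw_add_smul h (by positivity)
  have h2 := lw_inv (pd_M hSω hX hα0) (pd_M hSω hY hα0) h1
  have h3 : Lw (B + (α ^ 2 • Y + Sω)⁻¹) (B + (α ^ 2 • X + Sω)⁻¹) := by
    show _
    have : (B + (α ^ 2 • X + Sω)⁻¹) - (B + (α ^ 2 • Y + Sω)⁻¹)
        = (α ^ 2 • X + Sω)⁻¹ - (α ^ 2 • Y + Sω)⁻¹ := by abel
    show ((B + (α ^ 2 • X + Sω)⁻¹) - (B + (α ^ 2 • Y + Sω)⁻¹)).PosSemidef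
    rw [this]; exact h2
  exact lw_inv (pd_inner hB hSω hY hα0) (pd_inner hB hSω hX hα0) h3

lemma phi_lower (hB : B.PosSemidef) (hSω : Sω.PosDef) {X : Matrix n n ℝ}
    (hX : X.PosDef) (hα0 : 0 < α) : Lw (B + Sω⁻¹)⁻¹ (Phi B Sω α X) := by
  have h1 : Lw Sω (α ^ 2 • X + Sω) := by
    show ((α ^ 2 • X + Sω) - Sω).PosSemidef
    simpa using psd_smul hX.posSemidef (by positivity : (0:ℝ) ≤ α ^ 2)
  have h2 := lw_inv hSω (pd_M hSω hX hα0) h1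
  have h3 : Lw (B + (α ^ 2 • X + Sω)⁻¹) (B + Sω⁻¹) := by
    show ((B + Sω⁻¹) - (B + (α ^ 2 • X + Sω)⁻¹)).PosSemidef
    have : (B + Sω⁻¹) - (B + (α ^ 2 • X + Sω)⁻¹) = Sω⁻¹ - (α ^ 2 • X + Sω)⁻¹ := by abel
    rw [this]; exact h2
  exact lw_inv (pd_inner hB hSω hX hα0) (Matrix.PosDef.posSemidef_add hB hSω.inv) h3

lemma phi_le_M (hB : B.PosSemidef) (hSω : Sω.PosDef) {X : Matrix n n ℝ}
    (hX : X.PosDef) (hα0 : 0 < α) : Lw (Phi B Sω α X) (α ^ 2 • X + Sω) := by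
  have hM := pd_M hSω hX hα0
  have h1 : Lw (α ^ 2 • X + Sω)⁻¹ (B + (α ^ 2 • X + Sω)⁻¹) := lw_self_add_psd hB _
  have h2 := lw_inv hM.inv (pd_inner hB hSω hX hα0) h1
  rwa [Matrix.nonsing_inv_nonsing_inv _ (pd_isUnit_det hM)] at h2

lemma phi_le_Binv (hBpd : B.PosDef) (hSω : Sω.PosDef) {X : Matrix n n ℝ}
    (hX : X.PosDef) (hα0 : 0 < α) : Lw (Phi B Sω α X) B⁻¹ := by
  have hM := pd_M hSω hX hα0
  have h1 : Lw B (B + (α ^ 2 • X + Sω)⁻¹) := by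
    show ((B + (α ^ 2 • X + Sω)⁻¹) - B).PosSemidef
    simpa using hM.inv.posSemidef
  exact lw_inv hBpd (pd_inner hBpd.posSemidef hSω hX hα0) h1

lemma lw_quad {X Y : Matrix n n ℝ} (h : Lw X Y) (v : n → ℝ) :
    v ⬝ᵥ X *ᵥ v ≤ v ⬝ᵥ Y *ᵥ v := by
  have := h.dotProduct_mulVec_nonneg v
  rw [star_trivial, Matrix.sub_mulVec, dotProduct_sub] at this
  linarith

lemma single_dot (A : Matrix n n ℝ) (i j : n) :
    (Pi.single i 1 : n → ℝ) ⬝ᵥ A *ᵥ (Pi.single j 1 : n → ℝ) = A i j := by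
  simp [dotProduct, Matrix.mulVec, Pi.single_apply]

/-- Existence of a fixed point of `Phi` given an invariant order interval. -/
lemma exists_fixed (hB : B.PosSemidef) (hSω : Sω.PosDef) (hα0 : 0 < α)
    (K : Matrix n n ℝ) (hK : K.PosDef)
    (hKinv : ∀ X : Matrix n n ℝ, X.PosDef → Lw X K → Lw (Phi B Sω α X) K)
    (hLK : Lw (B + Sω⁻¹)⁻¹ K) :
    ∃ C : Matrix n n ℝ, C.PosDef ∧ Phi B Sω α C = C := by
  set L : Matrix n n ℝ := (B + Sω⁻¹)⁻¹ with hLdef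
  have hLpd : L.PosDef := (Matrix.PosDef.posSemidef_add hB hSω.inv).inv
  set f : ℕ → Matrix n n ℝ := fun k => (Phi B Sω α)^[k] L with hfdef
  have hf0 : f 0 = L := rfl
  have hfs : ∀ k, f (k + 1) = Phi B Sω α (f k) := fun k =>
    Function.iterate_succ_apply' _ _ _
  have hpd : ∀ k, (f k).PosDef := by
    intro k; induction k with
    | zero => exact hLpd
    | succ k ih => rw [hfs]; exact phi_pd hB hSω ih hα0
  have hbd : ∀ k, Lw (f k) K := by
    intro k; induction k with
    | zero => exact hLK
    | succ k ih => rw [hfs]; exact hKinv (f k) (hpd k) ih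
  have hmono : ∀ k, Lw (f k) (f (k + 1)) := by
    intro k; induction k with
    | zero => rw [hfs, hf0]; exact phi_lower hB hSω hLpd hα0
    | succ k ih =>
        have h := phi_mono hB hSω (hpd k) (hpd (k + 1)) hα0 ih
        rwa [← hfs k, ← hfs (k + 1)] at h
  have hmono' : ∀ k l, k ≤ l → Lw (f k) (f l) := by
    intro k l hkl
    induction l with
    | zero => rw [Nat.le_zero.mp hkl]; exact Lw.refl _
    | succ l ih =>
        rcases Nat.lt_or_ge k (l + 1) with h | h
        · exact (ih (Nat.lt_succ_iff.mp h)).trans (hmono l)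
        · rw [Nat.le_antisymm hkl h]; exact Lw.refl _
  -- quadratic forms
  set q : (n → ℝ) → ℕ → ℝ := fun v k => v ⬝ᵥ (f k) *ᵥ v with hqdef
  have hq_mono : ∀ v, Monotone (q v) := fun v =>
    monotone_nat_of_le_succ fun k => lw_quad (hmono k) v
  have hq_bdd : ∀ v, BddAbove (Set.range (q v)) := by
    intro v
    refine ⟨v ⬝ᵥ K *ᵥ v, ?_⟩
    rintro x ⟨k, rfl⟩
    exact lw_quad (hbd k) v
  set qs : (n → ℝ) → ℝ := fun v => ⨆ k, q v k with hqsdef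
  have hq_tendsto : ∀ v, Filter.Tendsto (q v) Filter.atTop (nhds (qs v)) := fun v =>
    tendsto_atTop_ciSup (hq_mono v) (hq_bdd v)
  have hq_le : ∀ v k, q v k ≤ qs v := fun v k => le_ciSup (hq_bdd v) k
  -- the limit matrix
  set e : n → (n → ℝ) := fun i => Pi.single i 1 with hedef
  set Cl : Matrix n n ℝ :=
    Matrix.of fun i j => (qs (e i + e j) - qs (e i) - qs (e j)) / 2 with hCldef
  have hsym : ∀ k i j, f k i j = f k j i := by
    intro k i j
    simpa using (hpd k).1.apply j i
  have hentry : ∀ k i j, f k i j = (q (e i + e j) k - q (e i) k - q (e j) k) / 2 := by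
    intro k i j
    have hexp : q (e i + e j) k
        = q (e i) k + q (e j) k + f k i j + f k j i := by
      simp only [hqdef, hedef, Matrix.mulVec_add, dotProduct_add,
        add_dotProduct, single_dot]
      ring
    rw [hexp, ← hsym k i j]; ring
  have htend_entry : ∀ i j,
      Filter.Tendsto (fun k => f k i j) Filter.atTop (nhds (Cl i j)) := by
    intro i j
    have : (fun k => f k i j)
        = fun k => (q (e i + e j) k - q (e i) k - q (e j) k) / 2 := by
      funext k; exact hentry k i j
    rw [this, hCldef]
    show Filter.Tendsto _ _ (nhds ((qs (e i + e j) - qs (e i) - qs (e j)) / 2))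
    exact (((hq_tendsto _).sub (hq_tendsto _)).sub (hq_tendsto _)).div_const 2
  have hql : ∀ v, v ⬝ᵥ Cl *ᵥ v = qs v := by
    intro v
    have h1 : Filter.Tendsto (fun k => v ⬝ᵥ (f k) *ᵥ v) Filter.atTop
        (nhds (v ⬝ᵥ Cl *ᵥ v)) := by
      have hrw : ∀ (A : Matrix n n ℝ), v ⬝ᵥ A *ᵥ v = ∑ i, v i * ∑ j, A i j * v j := by
        intro A; rfl
      simp only [hrw]
      refine tendsto_finset_sum _ fun i _ => ?_
      exact (tendsto_const_nhds.mul (tendsto_finset_sum _ fun j _ =>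
        (htend_entry i j).mul tendsto_const_nhds))
    exact tendsto_nhds_unique h1 (hq_tendsto v)
  have hClpd : Cl.PosDef := by
    refine .of_dotProduct_mulVec_pos ?_ ?_
    · show Clᴴ = Cl
      ext i j
      simp only [Matrix.conjTranspose_apply, star_trivial, hCldef, Matrix.of_apply]
      rw [add_comm (e j) (e i)]
      ring
    · intro v hv
      rw [star_trivial, hql v]
      have h0 : v ⬝ᵥ L *ᵥ v ≤ qs v := by
        have := hq_le v 0
        rwa [hqdef] at this
      have hpos : 0 < v ⬝ᵥ L *ᵥ v := by simpa using hLpd.dotProduct_mulVec_pos hv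
      linarith
  -- convergence of matrices
  have htendM : Filter.Tendsto f Filter.atTop (nhds Cl) := by
    refine tendsto_pi_nhds.mpr ?_
    intro i
    rw [tendsto_pi_nhds]
    intro j
    exact htend_entry i j
  -- continuity of Phi at Cl
  have hMcl : (α ^ 2 • Cl + Sω).PosDef := pd_M hSω hClpd hα0
  have hinner : (B + (α ^ 2 • Cl + Sω)⁻¹).PosDef := pd_inner hB hSω hClpd hα0
  have hinv_cont : ∀ (A : Matrix n n ℝ), IsUnit A.det → ContinuousAt Inv.inv A := by
    intro A hA
    refine continuousAt_matrix_inv A ?_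
    have : (Ring.inverse : ℝ → ℝ) = Inv.inv := Ring.inverse_eq_inv'
    rw [this]
    exact continuousAt_inv₀ (isUnit_iff_ne_zero.mp hA)
  have hcont : ContinuousAt (Phi B Sω α) Cl := by
    have hg : ContinuousAt (fun X : Matrix n n ℝ => B + (α ^ 2 • X + Sω)⁻¹) Cl := by
      refine ContinuousAt.add continuousAt_const ?_
      refine ContinuousAt.comp (hinv_cont _ (pd_isUnit_det hMcl)) ?_
      exact ((continuous_id.const_smul (α ^ 2)).add continuous_const).continuousAt
    exact ContinuousAt.comp (hinv_cont _ (pd_isUnit_det hinner)) hg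
  have h1 : Filter.Tendsto (fun k => Phi B Sω α (f k)) Filter.atTop
      (nhds (Phi B Sω α Cl)) := hcont.tendsto.comp htendM
  have h2 : Filter.Tendsto (fun k => f (k + 1)) Filter.atTop (nhds Cl) :=
    htendM.comp (Filter.tendsto_add_atTop_nat 1)
  have h3 : (fun k => Phi B Sω α (f k)) = fun k => f (k + 1) := by
    funext k; exact (hfs k).symm
  rw [h3] at h1
  exact ⟨Cl, hClpd, tendsto_nhds_unique h1 h2⟩

lemma fixed_lw_M {B Sω C : Matrix n n ℝ} (hB : B.PosSemidef) (hSω : Sω.PosDef) {α : ℝ}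
    (hα0 : 0 < α) (hC : C.PosDef) (heq : C⁻¹ = B + (α ^ 2 • C + Sω)⁻¹) :
    Lw C (α ^ 2 • C + Sω) := by
  have hM := pd_M hSω hC hα0
  have h1 : Lw (α ^ 2 • C + Sω)⁻¹ C⁻¹ := by
    show (C⁻¹ - (α ^ 2 • C + Sω)⁻¹).PosSemidef
    rw [heq]
    simpa using hB
  have h2 := lw_inv hM.inv hC.inv h1
  rwa [Matrix.nonsing_inv_nonsing_inv _ (pd_isUnit_det hC),
    Matrix.nonsing_inv_nonsing_inv _ (pd_isUnit_det hM)] at h2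

lemma fixed_lw_Binv {B Sω C : Matrix n n ℝ} (hBpd : B.PosDef) (hSω : Sω.PosDef) {α : ℝ}
    (hα0 : 0 < α) (hC : C.PosDef) (heq : C⁻¹ = B + (α ^ 2 • C + Sω)⁻¹) :
    Lw C B⁻¹ := by
  have hM := pd_M hSω hC hα0
  have h1 : Lw B C⁻¹ := by
    show (C⁻¹ - B).PosSemidef
    rw [heq]
    simpa using hM.inv.posSemidef
  have h2 := lw_inv hBpd hC.inv h1
  rwa [Matrix.nonsing_inv_nonsing_inv _ (pd_isUnit_det hC)] at h2

lemma fixed_eq_of_phi_fix {B Sω C : Matrix n n ℝ} (hB : B.PosSemidef) (hSω : Sω.PosDef)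
    {α : ℝ} (hα0 : 0 < α) (hC : C.PosDef) (hfix : Phi B Sω α C = C) :
    C⁻¹ = B + (α ^ 2 • C + Sω)⁻¹ := by
  have h := congrArg (fun X : Matrix n n ℝ => X⁻¹) hfix
  beta_reduce at h
  rw [← h]
  show (Phi B Sω α C)⁻¹ = _
  unfold Phi
  exact Matrix.nonsing_inv_nonsing_inv _ (pd_isUnit_det (pd_inner hB hSω hC hα0))

end PhiLemmas

end SSC

open SSC in
theorem steady_state_covariance_exists_unique
    {Nθ Ny : ℕ} (hNθ : 0 < Nθ) (hNy : 0 < Ny)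
    (G : Matrix (Fin Ny) (Fin Nθ) ℝ)
    (Sν : Matrix (Fin Ny) (Fin Ny) ℝ) (hSν : Sν.PosDef)
    (Sω : Matrix (Fin Nθ) (Fin Nθ) ℝ) (hSω : Sω.PosDef)
    (α : ℝ) (hα : α ∈ Set.Ioc (0 : ℝ) 1)
    (hcase : α < 1 ∨ (α = 1 ∧ (Gᵀ * Sν⁻¹ * G).PosDef)) :
    ∃! Cinf : Matrix (Fin Nθ) (Fin Nθ) ℝ,
      Cinf.PosDef ∧ Cinf⁻¹ = Gᵀ * Sν⁻¹ * G + (α ^ 2 • Cinf + Sω)⁻¹ := by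
  obtain ⟨hα0, hα1⟩ := hα
  set B := Gᵀ * Sν⁻¹ * G with hBdef
  have hB : B.PosSemidef := by
    have := hSν.inv.posSemidef.conjTranspose_mul_mul_same G
    rwa [Matrix.conjTranspose_eq_transpose_of_trivial] at this
  have hLpd : ((B + Sω⁻¹)⁻¹ : Matrix (Fin Nθ) (Fin Nθ) ℝ).PosDef :=
    (Matrix.PosDef.posSemidef_add hB hSω.inv).inv
  rcases hcase with hlt | ⟨hone, hBpd⟩
  · -- case α < 1
    have hα2 : α ^ 2 < 1 := by nlinarith
    have h1α2 : (0:ℝ) < 1 - α ^ 2 := by linarith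
    set K : Matrix (Fin Nθ) (Fin Nθ) ℝ := (1 - α ^ 2)⁻¹ • Sω with hKdef
    have hKpd : K.PosDef := pd_smul hSω (by positivity)
    have hmain : ∃ C : Matrix (Fin Nθ) (Fin Nθ) ℝ, C.PosDef ∧ Phi B Sω α C = C := by
      apply exists_fixed hB hSω hα0 K hKpd
      · intro X hX hXK
        have h1 := phi_le_M hB hSω hX hα0
        have h2 : Lw (α ^ 2 • X + Sω) (α ^ 2 • K + Sω) := lw_add_smul hXK (by positivity)
        have h3 : α ^ 2 • K + Sω = K := by
          have hs : α ^ 2 * (1 - α ^ 2)⁻¹ + 1 = (1 - α ^ 2)⁻¹ := by field_simp; ring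
          rw [hKdef]
          calc α ^ 2 • ((1 - α ^ 2)⁻¹ • Sω) + Sω
              = (α ^ 2 * (1 - α ^ 2)⁻¹) • Sω + (1:ℝ) • Sω := by rw [smul_smul, one_smul]
            _ = (α ^ 2 * (1 - α ^ 2)⁻¹ + 1) • Sω := (add_smul _ _ _).symm
            _ = (1 - α ^ 2)⁻¹ • Sω := by rw [hs]
        exact h1.trans (h3 ▸ h2)
      · have hLS : Lw ((B + Sω⁻¹)⁻¹) Sω := by
          have h1 : Lw Sω⁻¹ (B + Sω⁻¹) := lw_self_add_psd hB _
          have h2 := lw_inv hSω.inv (Matrix.PosDef.posSemidef_add hB hSω.inv) h1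
          rwa [Matrix.nonsing_inv_nonsing_inv _ (pd_isUnit_det hSω)] at h2
        have hSK : Lw Sω K := by
          show (K - Sω).PosSemidef
          have he : K - Sω = ((1 - α ^ 2)⁻¹ - 1) • Sω := by
            rw [hKdef, sub_smul, one_smul]
          rw [he]
          refine psd_smul hSω.posSemidef ?_
          have hinv : (1 - α ^ 2) * (1 - α ^ 2)⁻¹ = 1 := mul_inv_cancel₀ h1α2.ne'
          nlinarith [inv_pos.mpr h1α2, mul_nonneg (inv_pos.mpr h1α2).le (sq_nonneg α)]
        exact hLS.trans hSK
    obtain ⟨C, hCpd, hCfix⟩ := hmain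
    have hCeq := fixed_eq_of_phi_fix hB hSω hα0 hCpd hCfix
    refine ⟨C, ⟨hCpd, hCeq⟩, ?_⟩
    rintro C' ⟨hC'pd, hC'eq⟩
    have hr1 : Lw ((α / α) • C') (α ^ 2 • C' + Sω) := by
      rw [div_self hα0.ne', one_smul]
      exact fixed_lw_M hB hSω hα0 hC'pd hC'eq
    have hr2 : Lw ((α / α) • C) (α ^ 2 • C + Sω) := by
      rw [div_self hα0.ne', one_smul]
      exact fixed_lw_M hB hSω hα0 hCpd hCeq
    exact uniq_aux hSω hα0 hα0 hlt hC'pd hCpd hC'eq hCeq hr1 hr2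
  · -- case α = 1
    subst hone
    have hmain : ∃ C : Matrix (Fin Nθ) (Fin Nθ) ℝ, C.PosDef ∧ Phi B Sω 1 C = C := by
      apply exists_fixed hB hSω hα0 B⁻¹ hBpd.inv
      · intro X hX _
        exact phi_le_Binv hBpd hSω hX hα0
      · exact (phi_lower hB hSω hLpd hα0).trans (phi_le_Binv hBpd hSω hLpd hα0)
    obtain ⟨C, hCpd, hCfix⟩ := hmain
    have hCeq := fixed_eq_of_phi_fix hB hSω hα0 hCpd hCfix
    refine ⟨C, ⟨hCpd, hCeq⟩, ?_⟩
    rintro C' ⟨hC'pd, hC'eq⟩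
    obtain ⟨δ, hδ0, hδlw⟩ := pd_exists_smul_lw hBpd.inv hSω
    have hδ1 : (0:ℝ) < 1 + δ := by linarith
    have hc0 : (0:ℝ) < (1 + δ)⁻¹ := by positivity
    have hc1 : (1 + δ)⁻¹ < 1 := by
      have := (div_lt_one hδ1).mpr (by linarith : (1:ℝ) < 1 + δ)
      rwa [one_div] at this
    have hr : ∀ X : Matrix (Fin Nθ) (Fin Nθ) ℝ, X.PosDef →
        X⁻¹ = B + ((1:ℝ) ^ 2 • X + Sω)⁻¹ →
        Lw (((1:ℝ) / (1 + δ)⁻¹) • X) ((1:ℝ) ^ 2 • X + Sω) := by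
      intro X hX hXeq
      have hXB := fixed_lw_Binv hBpd hSω hα0 hX hXeq
      have h1 : Lw (δ • X) Sω := (hXB.smul hδ0.le).trans hδlw
      have h2 : Lw (X + δ • X) (X + Sω) := h1.add_left
      have h3 : ((1:ℝ) / (1 + δ)⁻¹) • X = X + δ • X := by
        rw [one_div, inv_inv, add_smul, one_smul]
      have h4 : (1:ℝ) ^ 2 • X + Sω = X + Sω := by rw [one_pow, one_smul]
      rw [h3, h4]
      exact h2
    exact uniq_aux hSω hα0 hc0 hc1 hC'pd hCpd hC'eq hCeq
      (hr C' hC'pd hC'eq) (hr C hCpd hCeq)
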